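/- Let 𝒜₁, 𝒜₂, ℬ₁, ℬ₂ be self-adjoint extensions of A with tr(dom 𝒜ᵢ) = ran Pᵢ and tr(dom ℬᵢ) = ran Qᵢ for orthogonal projections Pᵢ, Qᵢ in 𝔥², and define 𝒩ᵢ on dom(𝒜ᵢ) × dom(ℬᵢ) by 𝒩ᵢ(u,v) = (−ℬᵢv, 𝒜ᵢu). Let ζ ∉ Spec(𝒩₁) ∪ Spec(𝒩₂) and write Rᵢ(ζ) := (𝒩ᵢ − ζ)⁻¹. Then the complex conjugate ζ̄ also lies outside Spec(𝒩₁) ∪ Spec(𝒩₂), and one has the symplectic resolvent difference formulas R₁(ζ) − R₂(ζ) = τ (T R₁(ζ̄))* 𝒥 T R₂(ζ) and R₁(ζ) − R₂(ζ) = τ (T R₁(ζ̄))* ((P₁ J P₂) ⊕ (−Q₁ J Q₂)) T R₂(ζ), as identities of bounded operators on H². -/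

import Mathlib

noncomputable section

open Function Set

namespace CSO

local notation "⟪" x ", " y "⟫" => (inner ℂ x y : ℂ)

/-- The ℓ²-direct sum `E ⊕ E`. -/
abbrev Sq (E : Type*) : Type _ := WithLp 2 (E × E)

section Pieces

variable {E F E' F' : Type*}
  [NormedAddCommGroup E] [InnerProductSpace ℂ E]
  [NormedAddCommGroup F] [InnerProductSpace ℂ F]
  [NormedAddCommGroup E'] [InnerProductSpace ℂ E']
  [NormedAddCommGroup F'] [InnerProductSpace ℂ F']

/-- Pairing map into the ℓ²-direct sum. -/
def mk2 (x y : E) : Sq E := (WithLp.equiv 2 (E × E)).symm (x, y)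

/-- First component. -/
def c1 (u : Sq E) : E := (WithLp.equiv 2 (E × E) u).1

/-- Second component. -/
def c2 (u : Sq E) : E := (WithLp.equiv 2 (E × E) u).2

/-- Transport of a product of continuous linear maps to the ℓ²-products. -/
def pm (A : E →L[ℂ] E') (B : F →L[ℂ] F') :
    WithLp 2 (E × F) →L[ℂ] WithLp 2 (E' × F') :=
  (((WithLp.prodContinuousLinearEquiv 2 ℂ E' F').symm :
      (E' × F') →L[ℂ] WithLp 2 (E' × F')).comp (A.prodMap B)).comp
    ((WithLp.prodContinuousLinearEquiv 2 ℂ E F :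
      WithLp 2 (E × F) ≃L[ℂ] (E × F)) : WithLp 2 (E × F) →L[ℂ] E × F)

/-- The continuous linear map `x ↦ (A x, B x)` into an ℓ²-direct sum. -/
def mk2L (A B : E →L[ℂ] F) : E →L[ℂ] Sq F :=
  (((WithLp.prodContinuousLinearEquiv 2 ℂ F F).symm :
      (F × F) →L[ℂ] Sq F)).comp (A.prod B)

/-- First component as a continuous linear map. -/
def c1L : Sq E →L[ℂ] E :=
  (ContinuousLinearMap.fst ℂ E E).comp
    ((WithLp.prodContinuousLinearEquiv 2 ℂ E E :
      Sq E ≃L[ℂ] (E × E)) : Sq E →L[ℂ] E × E)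

/-- Second component as a continuous linear map. -/
def c2L : Sq E →L[ℂ] E :=
  (ContinuousLinearMap.snd ℂ E E).comp
    ((WithLp.prodContinuousLinearEquiv 2 ℂ E E :
      Sq E ≃L[ℂ] (E × E)) : Sq E →L[ℂ] E × E)

/-- The involution `τ (u₁, u₂) = (u₂, u₁)`. -/
def swapL (E : Type*) [NormedAddCommGroup E] [InnerProductSpace ℂ E] :
    Sq E →L[ℂ] Sq E := mk2L c2L c1L

/-- The standard symplectic matrix `J (f₁, f₂) = (f₂, -f₁)`. -/
def Jm (E : Type*) [NormedAddCommGroup E] [InnerProductSpace ℂ E] :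
    Sq E →L[ℂ] Sq E := mk2L c2L (-c1L)

/-- The symplectic matrix `𝒥 = J ⊕ (-J)` on `𝔥⁴`. -/
def calJ (E : Type*) [NormedAddCommGroup E] [InnerProductSpace ℂ E] :
    Sq (Sq E) →L[ℂ] Sq (Sq E) := pm (Jm E) (-(Jm E))

/-- The symplectic form `ω(f, g) = ⟨f₂, g₁⟩ - ⟨f₁, g₂⟩` on `𝔥²`. -/
def om (f g : Sq E) : ℂ := ⟪c2 f, c1 g⟫ - ⟪c1 f, c2 g⟫

/-- The symplectic form
`Ω(f, g) = ⟨f₂,g₁⟩ - ⟨f₁,g₂⟩ - ⟨f₄,g₃⟩ + ⟨f₃,g₄⟩` on `𝔥⁴`. -/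
def Om (f g : Sq (Sq E)) : ℂ := om (c1 f) (c1 g) - om (c2 f) (c2 g)

/-- Orthogonal projection predicate. -/
def IsOrthProj [CompleteSpace E] (P : E →L[ℂ] E) : Prop :=
  P.comp P = P ∧ IsSelfAdjoint P

/-- The range of `P` is a Lagrangian subspace of `(𝔥², ω)`. -/
def IsLagrangianRange (P : Sq E →L[ℂ] Sq E) : Prop :=
  ∀ f, f ∈ Set.range P ↔ ∀ g ∈ Set.range P, om f g = 0

end Pieces

/-- The core data: a closed densely defined symmetric operator `A` with equal finite
deficiency indices `dim 𝔥`, whose adjoint `A*` has domain the Hilbert space `Hp = H₊`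
(with the graph inner product), realized through the embedding `e : H₊ → H` and the
bounded operator `As = A* : H₊ → H`. -/
structure Core (H 𝔥 Hp : Type*) [NormedAddCommGroup H] [InnerProductSpace ℂ H]
    [NormedAddCommGroup 𝔥] [InnerProductSpace ℂ 𝔥]
    [NormedAddCommGroup Hp] [InnerProductSpace ℂ Hp] where
  e : Hp →L[ℂ] H
  As : Hp →L[ℂ] H
  e_inj : Function.Injective e
  graph_inner : ∀ u v : Hp, ⟪u, v⟫ = ⟪e u, e v⟫ + ⟪As u, As v⟫
  domA : Submodule ℂ Hp
  dense_dom : Dense (e '' (domA : Set Hp))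
  adjoint_iff : ∀ v w : H,
      (∃ p : Hp, e p = v ∧ As p = w) ↔ ∀ u ∈ domA, ⟪As u, v⟫ = ⟪e u, w⟫
  closed_graph : IsClosed {q : H × H | ∃ p ∈ domA, e p = q.1 ∧ As p = q.2}
  defect_m : Module.finrank ℂ
      (LinearMap.ker (As.toLinearMap - Complex.I • e.toLinearMap)) = Module.finrank ℂ 𝔥
  defect_p : Module.finrank ℂ
      (LinearMap.ker (As.toLinearMap + Complex.I • e.toLinearMap)) = Module.finrank ℂ 𝔥

variable {H 𝔥 Hp : Type*}
  [NormedAddCommGroup H] [InnerProductSpace ℂ H]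
  [NormedAddCommGroup 𝔥] [InnerProductSpace ℂ 𝔥]
  [NormedAddCommGroup Hp] [InnerProductSpace ℂ Hp]

/-- The embedding `H₊² → H²`. -/
def Core.emb2 (C : Core H 𝔥 Hp) : Sq Hp →L[ℂ] Sq H := pm C.e C.e

/-- The action `(u₁,u₂) ↦ (-A* u₂, A* u₁)` (the common formula for `N` and its
extensions `𝒩`). -/
def Core.Nmax (C : Core H 𝔥 Hp) : Sq Hp →L[ℂ] Sq H :=
  mk2L ((-C.As).comp c2L) (C.As.comp c1L)

/-- The action of `N* : (u₁,u₂) ↦ (A* u₂, -A* u₁)`. -/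
def Core.NstarOp (C : Core H 𝔥 Hp) : Sq Hp →L[ℂ] Sq H := -C.Nmax

/-- The action of `(τN)* : (u₁,u₂) ↦ (A* u₁, -A* u₂)`. -/
def Core.tauNstarOp (C : Core H 𝔥 Hp) : Sq Hp →L[ℂ] Sq H :=
  mk2L (C.As.comp c1L) ((-C.As).comp c2L)

/-- Trace operator (boundary triplet map) for `A*`: bounded, surjective, and
satisfying the abstract Green identity. -/
structure IsTrace (C : Core H 𝔥 Hp) (tr : Hp →L[ℂ] Sq 𝔥) : Prop where
  surj : Function.Surjective tr
  green : ∀ u v : Hp, ⟪C.As u, C.e v⟫ - ⟪C.e u, C.As v⟫ = om (tr u) (tr v)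

/-- The doubled trace operator `T = tr ⊕ tr : H₊² → 𝔥⁴`. -/
def Top (tr : Hp →L[ℂ] Sq 𝔥) : Sq Hp →L[ℂ] Sq (Sq 𝔥) := pm tr tr

/-- `dom ⊆ H₊` is the domain of a self-adjoint extension of `A` (the extension being
the restriction of `A*` to `dom`). -/
structure IsSAExt (C : Core H 𝔥 Hp) (dom : Submodule ℂ Hp) : Prop where
  le : C.domA ≤ dom
  sa : ∀ v w : H,
      (∃ p ∈ dom, C.e p = v ∧ C.As p = w) ↔ ∀ u ∈ dom, ⟪C.As u, v⟫ = ⟪C.e u, w⟫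

/-- The bounded potential `V(u,v) = (-G v, F u)` on `H²`. -/
def Vop [CompleteSpace H] (F G : H →L[ℂ] H) : Sq H →L[ℂ] Sq H :=
  mk2L ((-G).comp c2L) (F.comp c1L)

/-- The adjoint potential `V*(u,v) = (F v, -G u)` on `H²`. -/
def VopStar [CompleteSpace H] (F G : H →L[ℂ] H) : Sq H →L[ℂ] Sq H :=
  mk2L (F.comp c2L) ((-G).comp c1L)

/-- `p ∈ dom(𝒜) × dom(ℬ)` and `(𝒩 + V - ζ) p = x`. -/
def ResSol (C : Core H 𝔥 Hp) [CompleteSpace H] (dU dV : Submodule ℂ Hp)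
    (V : Sq H →L[ℂ] Sq H) (ζ : ℂ) (p : Sq Hp) (x : Sq H) : Prop :=
  c1 p ∈ dU ∧ c2 p ∈ dV ∧ C.Nmax p + V (C.emb2 p) - ζ • C.emb2 p = x

/-- `R = (𝒩 + V - ζ)⁻¹`, viewed as a bounded operator from `H²` to `H₊²`. -/
def IsResS (C : Core H 𝔥 Hp) [CompleteSpace H] (dU dV : Submodule ℂ Hp)
    (V : Sq H →L[ℂ] Sq H) (ζ : ℂ) (R : Sq H →L[ℂ] Sq Hp) : Prop :=
  (∀ x, ResSol C dU dV V ζ (R x) x) ∧ ∀ p x, ResSol C dU dV V ζ p x → R x = p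

/-- `R = (𝒩 + V - ζ)⁻¹ ∈ B(H²)`. -/
def IsResW (C : Core H 𝔥 Hp) [CompleteSpace H] (dU dV : Submodule ℂ Hp)
    (V : Sq H →L[ℂ] Sq H) (ζ : ℂ) (R : Sq H →L[ℂ] Sq H) : Prop :=
  (∀ x, ∃ p, ResSol C dU dV V ζ p x ∧ C.emb2 p = R x) ∧
    ∀ p x, ResSol C dU dV V ζ p x → R x = C.emb2 p

/-- The spectrum of `𝒩 + V` (complement of the resolvent set). -/
def specSet (C : Core H 𝔥 Hp) [CompleteSpace H] (dU dV : Submodule ℂ Hp)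
    (V : Sq H →L[ℂ] Sq H) : Set ℂ :=
  {ζ | ¬ ∃ R : Sq H →L[ℂ] Sq Hp, IsResS C dU dV V ζ R}

/-- The resolvent `(𝒩 + V - ζ)⁻¹ : H² → H₊²` (defined by choice; `0` off the
resolvent set). -/
def resolventS (C : Core H 𝔥 Hp) [CompleteSpace H] (dU dV : Submodule ℂ Hp)
    (V : Sq H →L[ℂ] Sq H) (ζ : ℂ) : Sq H →L[ℂ] Sq Hp :=
  open Classical in
  if h : ∃ R, IsResS C dU dV V ζ R then h.choose else 0

/-- The resolvent `(𝒩 + V - ζ)⁻¹ ∈ B(H²)`. -/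
def resolventW (C : Core H 𝔥 Hp) [CompleteSpace H] (dU dV : Submodule ℂ Hp)
    (V : Sq H →L[ℂ] Sq H) (ζ : ℂ) : Sq H →L[ℂ] Sq H :=
  C.emb2.comp (resolventS C dU dV V ζ)

/-- `ζ` is an eigenvalue of `𝒩 + V`. -/
def IsEig (C : Core H 𝔥 Hp) [CompleteSpace H] (dU dV : Submodule ℂ Hp)
    (V : Sq H →L[ℂ] Sq H) (ζ : ℂ) : Prop :=
  ∃ p : Sq Hp, p ≠ 0 ∧ c1 p ∈ dU ∧ c2 p ∈ dV ∧
    C.Nmax p + V (C.emb2 p) = ζ • C.emb2 p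

/-- The one-parameter families of Hypothesis 3.1: trace operators, orthogonal
projections with Lagrangian ranges, self-adjoint extensions compatible with the
projections, and bounded self-adjoint perturbations. -/
structure IsFamily [CompleteSpace H] [CompleteSpace Hp] [FiniteDimensional ℂ 𝔥]
    (C : Core H 𝔥 Hp)
    (tr : ℝ → Hp →L[ℂ] Sq 𝔥) (P Q : ℝ → Sq 𝔥 →L[ℂ] Sq 𝔥)
    (dU dV : ℝ → Submodule ℂ Hp) (F G : ℝ → H →L[ℂ] H) : Prop where
  htr : ∀ t ∈ Icc (0:ℝ) 1, IsTrace C (tr t)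
  hP : ∀ t ∈ Icc (0:ℝ) 1, IsOrthProj (P t) ∧ IsLagrangianRange (P t)
  hQ : ∀ t ∈ Icc (0:ℝ) 1, IsOrthProj (Q t) ∧ IsLagrangianRange (Q t)
  hU : ∀ t ∈ Icc (0:ℝ) 1, IsSAExt C (dU t)
  hV : ∀ t ∈ Icc (0:ℝ) 1, IsSAExt C (dV t)
  htrU : ∀ t ∈ Icc (0:ℝ) 1, tr t '' ((dU t : Set Hp)) = Set.range (P t)
  htrV : ∀ t ∈ Icc (0:ℝ) 1, tr t '' ((dV t : Set Hp)) = Set.range (Q t)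
  hF : ∀ t ∈ Icc (0:ℝ) 1, IsSelfAdjoint (F t)
  hG : ∀ t ∈ Icc (0:ℝ) 1, IsSelfAdjoint (G t)

/-- Hypothesis 3.3: there is a point `z` in the resolvent set of `𝒩_t + V_t`
for all `t` near `t₀`. -/
def HypZ [CompleteSpace H] (C : Core H 𝔥 Hp) (dU dV : ℝ → Submodule ℂ Hp)
    (F G : ℝ → H →L[ℂ] H) (t₀ : ℝ) (z : ℂ) : Prop :=
  ∃ δ > 0, ∀ t : ℝ, |t - t₀| < δ →
    ∃ R, IsResS C (dU t) (dV t) (Vop (F t) (G t)) z R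

end CSO

namespace CSO

local notation "⟪" x ", " y "⟫" => (inner ℂ x y : ℂ)

set_option linter.unusedSectionVars false
set_option maxHeartbeats 1000000

section Helper1
variable {E F E' F' : Type*}
  [NormedAddCommGroup E] [InnerProductSpace ℂ E]
  [NormedAddCommGroup F] [InnerProductSpace ℂ F]
  [NormedAddCommGroup E'] [InnerProductSpace ℂ E']
  [NormedAddCommGroup F'] [InnerProductSpace ℂ F']

@[simp] lemma c1_mk2 (x y : E) : c1 (mk2 x y) = x := rfl
@[simp] lemma c2_mk2 (x y : E) : c2 (mk2 x y) = y := rfl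
lemma sq_ext {u v : Sq E} (h1 : c1 u = c1 v) (h2 : c2 u = c2 v) : u = v :=
  (WithLp.equiv 2 (E × E)).injective (Prod.ext h1 h2)
lemma inner_sq (u v : Sq E) : ⟪u, v⟫ = ⟪c1 u, c1 v⟫ + ⟪c2 u, c2 v⟫ := rfl
@[simp] lemma c1_add (u v : Sq E) : c1 (u + v) = c1 u + c1 v := rfl
@[simp] lemma c2_add (u v : Sq E) : c2 (u + v) = c2 u + c2 v := rfl
@[simp] lemma c1_sub (u v : Sq E) : c1 (u - v) = c1 u - c1 v := rfl
@[simp] lemma c2_sub (u v : Sq E) : c2 (u - v) = c2 u - c2 v := rfl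
@[simp] lemma c1_neg (u : Sq E) : c1 (-u) = -(c1 u) := rfl
@[simp] lemma c2_neg (u : Sq E) : c2 (-u) = -(c2 u) := rfl
@[simp] lemma c1_smul (a : ℂ) (u : Sq E) : c1 (a • u) = a • c1 u := rfl
@[simp] lemma c2_smul (a : ℂ) (u : Sq E) : c2 (a • u) = a • c2 u := rfl
@[simp] lemma c1_zero : c1 (0 : Sq E) = 0 := rfl
@[simp] lemma c2_zero : c2 (0 : Sq E) = 0 := rfl
@[simp] lemma mk2L_apply (A B : E →L[ℂ] F) (x : E) : mk2L A B x = mk2 (A x) (B x) := rfl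
@[simp] lemma c1L_apply (u : Sq E) : c1L u = c1 u := rfl
@[simp] lemma c2L_apply (u : Sq E) : c2L u = c2 u := rfl
@[simp] lemma c1_pm (A B : E →L[ℂ] E') (u : Sq E) : c1 (pm A B u) = A (c1 u) := rfl
@[simp] lemma c2_pm (A B : E →L[ℂ] E') (u : Sq E) : c2 (pm A B u) = B (c2 u) := rfl
@[simp] lemma fst_eq_c1 (u : Sq E) : u.fst = c1 u := rfl
@[simp] lemma snd_eq_c2 (u : Sq E) : u.snd = c2 u := rfl
lemma swapL_apply (u : Sq E) : swapL E u = mk2 (c2 u) (c1 u) := rfl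
lemma Jm_apply (u : Sq E) : Jm E u = mk2 (c2 u) (-(c1 u)) := rfl
lemma inner_swap_left (u v : Sq E) : ⟪swapL E u, v⟫ = ⟪u, swapL E v⟫ := by
  simp [swapL_apply, inner_sq]; ring
lemma inner_Jm (u v : Sq E) : ⟪Jm E u, v⟫ = om u v := by
  simp [Jm_apply, inner_sq, om]; ring
lemma norm_sq_le (u : Sq E) : ‖u‖ ≤ ‖c1 u‖ + ‖c2 u‖ := by
  have h := WithLp.prod_norm_sq_eq_of_L2 u
  rw [fst_eq_c1, snd_eq_c2] at h
  have h1 : (0:ℝ) ≤ ‖c1 u‖ := norm_nonneg _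
  have h2 : (0:ℝ) ≤ ‖c2 u‖ := norm_nonneg _
  have h0 : (0:ℝ) ≤ ‖u‖ := norm_nonneg _
  nlinarith [h]
lemma proj_fix {G : Type*} [NormedAddCommGroup G] [InnerProductSpace ℂ G]
    [CompleteSpace G] {P : G →L[ℂ] G} (hP : IsOrthProj P) {f : G}
    (hf : f ∈ Set.range P) : P f = f := by
  obtain ⟨g, rfl⟩ := hf
  have := ContinuousLinearMap.ext_iff.mp hP.1 g
  simpa using this
end Helper1

section Helper2
variable {H 𝔥 Hp : Type*}
  [NormedAddCommGroup H] [InnerProductSpace ℂ H]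
  [NormedAddCommGroup 𝔥] [InnerProductSpace ℂ 𝔥]
  [NormedAddCommGroup Hp] [InnerProductSpace ℂ Hp]

lemma Nmax_apply (C : Core H 𝔥 Hp) (p : Sq Hp) :
    C.Nmax p = mk2 (-(C.As (c2 p))) (C.As (c1 p)) := rfl
lemma emb2_apply (C : Core H 𝔥 Hp) (p : Sq Hp) :
    C.emb2 p = mk2 (C.e (c1 p)) (C.e (c2 p)) := rfl
@[simp] lemma Top_apply (tr : Hp →L[ℂ] Sq 𝔥) (p : Sq Hp) :
    Top tr p = mk2 (tr (c1 p)) (tr (c2 p)) := rfl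

variable [CompleteSpace H]

lemma ressol_eq1 {C : Core H 𝔥 Hp} {dU dV : Submodule ℂ Hp} {ζ : ℂ} {p : Sq Hp}
    {x : Sq H} (h : ResSol C dU dV 0 ζ p x) :
    -(C.As (c2 p)) - ζ • C.e (c1 p) = c1 x := by
  have h3 := h.2.2
  have := congrArg c1 h3
  simpa [Nmax_apply, emb2_apply] using this
lemma ressol_eq2 {C : Core H 𝔥 Hp} {dU dV : Submodule ℂ Hp} {ζ : ℂ} {p : Sq Hp}
    {x : Sq H} (h : ResSol C dU dV 0 ζ p x) :
    C.As (c1 p) - ζ • C.e (c2 p) = c2 x := by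
  have h3 := h.2.2
  have := congrArg c2 h3
  simpa [Nmax_apply, emb2_apply] using this
lemma ressol_mk {C : Core H 𝔥 Hp} {dU dV : Submodule ℂ Hp} {ζ : ℂ} {p : Sq Hp}
    {x : Sq H} (h1 : c1 p ∈ dU) (h2 : c2 p ∈ dV)
    (e1 : -(C.As (c2 p)) - ζ • C.e (c1 p) = c1 x)
    (e2 : C.As (c1 p) - ζ • C.e (c2 p) = c2 x) :
    ResSol C dU dV 0 ζ p x := by
  refine ⟨h1, h2, ?_⟩
  apply sq_ext <;> simp [Nmax_apply, emb2_apply, e1, e2]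

lemma ressol_add {C : Core H 𝔥 Hp} {dU dV : Submodule ℂ Hp} {ζ : ℂ}
    {p q : Sq Hp} {x y : Sq H} (h1 : ResSol C dU dV 0 ζ p x)
    (h2 : ResSol C dU dV 0 ζ q y) : ResSol C dU dV 0 ζ (p + q) (x + y) := by
  refine ressol_mk (add_mem h1.1 h2.1) (add_mem h1.2.1 h2.2.1) ?_ ?_
  · simp only [c1_add, c2_add, map_add]
    rw [← ressol_eq1 h1, ← ressol_eq1 h2]; module
  · simp only [c1_add, c2_add, map_add]
    rw [← ressol_eq2 h1, ← ressol_eq2 h2]; module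

lemma ressol_smul {C : Core H 𝔥 Hp} {dU dV : Submodule ℂ Hp} {ζ : ℂ}
    {p : Sq Hp} {x : Sq H} (a : ℂ) (h : ResSol C dU dV 0 ζ p x) :
    ResSol C dU dV 0 ζ (a • p) (a • x) := by
  refine ressol_mk (Submodule.smul_mem _ a h.1) (Submodule.smul_mem _ a h.2.1) ?_ ?_
  · simp only [c1_smul, c2_smul, map_smul]
    rw [← ressol_eq1 h]; module
  · simp only [c1_smul, c2_smul, map_smul]
    rw [← ressol_eq2 h]; module

lemma sa_weak {C : Core H 𝔥 Hp} {dom : Submodule ℂ Hp} (h : IsSAExt C dom)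
    {u v : Hp} (hu : u ∈ dom) (hv : v ∈ dom) :
    ⟪C.As u, C.e v⟫ = ⟪C.e u, C.As v⟫ :=
  ((h.sa (C.e v) (C.As v)).mp ⟨v, hv, rfl, rfl⟩) u hu

lemma om_tr_zero {C : Core H 𝔥 Hp} {tr : Hp →L[ℂ] Sq 𝔥} (htr : IsTrace C tr)
    {dom : Submodule ℂ Hp} (h : IsSAExt C dom) {u v : Hp}
    (hu : u ∈ dom) (hv : v ∈ dom) : om (tr u) (tr v) = 0 := by
  rw [← htr.green, sa_weak h hu hv]; ring

end Helper2

section Middle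
set_option synthInstance.maxHeartbeats 400000 in
section
variable {H 𝔥 Hp : Type*}
  [NormedAddCommGroup H] [InnerProductSpace ℂ H] [CompleteSpace H]
  [NormedAddCommGroup 𝔥] [InnerProductSpace ℂ 𝔥]
  [NormedAddCommGroup Hp] [InnerProductSpace ℂ Hp]

lemma claimA_gen (C : Core H 𝔥 Hp) (dU dV : Submodule ℂ Hp) (ζ : ℂ)
    (R : Sq H →L[ℂ] Sq Hp) (hR : IsResS C dU dV 0 ζ R)
    {u : Hp} (hu : u ∈ dU) (z : Sq H) :
    ⟪C.As u, c2 (ContinuousLinearMap.adjoint (C.emb2.comp R) z)⟫ =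
      ⟪C.e u, c1 z⟫ + (starRingEnd ℂ) ζ *
        ⟪C.e u, c1 (ContinuousLinearMap.adjoint (C.emb2.comp R) z)⟫ := by
  have hsol : R (mk2 (-(ζ • C.e u)) (C.As u)) = mk2 u 0 :=
    hR.2 _ _ (ressol_mk (by simpa using hu) (by simpa using dV.zero_mem)
      (by simp) (by simp))
  have hWdec : (C.emb2.comp R) (mk2 0 (C.As u)) =
      mk2 (C.e u) 0 + ζ • (C.emb2.comp R) (mk2 (C.e u) 0) := by
    have hdec : (mk2 (0:H) (C.As u) : Sq H)
        = mk2 (-(ζ • C.e u)) (C.As u) + ζ • mk2 (C.e u) 0 := by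
      apply sq_ext <;> simp
    rw [hdec, map_add, map_smul]
    congr 1
    show C.emb2 (R _) = _
    rw [hsol]; apply sq_ext <;> simp [emb2_apply]
  have h1 : ⟪C.As u, c2 (ContinuousLinearMap.adjoint (C.emb2.comp R) z)⟫ =
      ⟪(mk2 (0:H) (C.As u) : Sq H), ContinuousLinearMap.adjoint (C.emb2.comp R) z⟫ := by
    rw [inner_sq]; simp
  rw [h1, ContinuousLinearMap.adjoint_inner_right (C.emb2.comp R) (mk2 (0:H) (C.As u)) z, hWdec, inner_add_left, inner_smul_left,
      ← ContinuousLinearMap.adjoint_inner_right (C.emb2.comp R) (mk2 (C.e u) 0) z]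
  simp [inner_sq]

lemma claimB_gen (C : Core H 𝔥 Hp) (dU dV : Submodule ℂ Hp) (ζ : ℂ)
    (R : Sq H →L[ℂ] Sq Hp) (hR : IsResS C dU dV 0 ζ R)
    {u : Hp} (hu : u ∈ dV) (z : Sq H) :
    ⟪C.As u, c1 (ContinuousLinearMap.adjoint (C.emb2.comp R) z)⟫ =
      -⟪C.e u, c2 z⟫ - (starRingEnd ℂ) ζ *
        ⟪C.e u, c2 (ContinuousLinearMap.adjoint (C.emb2.comp R) z)⟫ := by
  have hsol : R (mk2 (-(C.As u)) (-(ζ • C.e u))) = mk2 0 u :=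
    hR.2 _ _ (ressol_mk (by simpa using dU.zero_mem) (by simpa using hu)
      (by simp) (by simp))
  have hWdec : (C.emb2.comp R) (mk2 (C.As u) 0) =
      -(mk2 0 (C.e u)) - ζ • (C.emb2.comp R) (mk2 0 (C.e u)) := by
    have hdec : (mk2 (C.As u) (0:H) : Sq H)
        = -(mk2 (-(C.As u)) (-(ζ • C.e u))) - ζ • mk2 0 (C.e u) := by
      apply sq_ext <;> simp
    rw [hdec, map_sub, map_neg, map_smul]
    congr 2
    show C.emb2 (R _) = _
    rw [hsol]; apply sq_ext <;> simp [emb2_apply]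
  have h1 : ⟪C.As u, c1 (ContinuousLinearMap.adjoint (C.emb2.comp R) z)⟫ =
      ⟪(mk2 (C.As u) (0:H) : Sq H), ContinuousLinearMap.adjoint (C.emb2.comp R) z⟫ := by
    rw [inner_sq]; simp
  rw [h1, ContinuousLinearMap.adjoint_inner_right (C.emb2.comp R) (mk2 (C.As u) (0:H)) z, hWdec, inner_sub_left, inner_neg_left,
      inner_smul_left,
      ← ContinuousLinearMap.adjoint_inner_right (C.emb2.comp R) (mk2 0 (C.e u)) z]
  simp [inner_sq]

lemma conj_uniq0 (C : Core H 𝔥 Hp) (dU dV : Submodule ℂ Hp)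
    (hU : IsSAExt C dU) (hV : IsSAExt C dV) (ζ : ℂ)
    (R : Sq H →L[ℂ] Sq Hp) (hR : IsResS C dU dV 0 ζ R)
    {d : Sq Hp} (hd : ResSol C dU dV 0 ((starRingEnd ℂ) ζ) d 0) : d = 0 := by
  have h1 := ressol_eq1 hd
  have h2 := ressol_eq2 hd
  simp only [c1_zero, c2_zero] at h1 h2
  have hAd2 : C.As (c2 d) = -((starRingEnd ℂ) ζ • C.e (c1 d)) := by
    linear_combination (norm := module) -h1
  have hAd1 : C.As (c1 d) = (starRingEnd ℂ) ζ • C.e (c2 d) := by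
    linear_combination (norm := module) h2
  have key : ∀ x : Sq H, ⟪x, (mk2 (C.e (c2 d)) (C.e (c1 d)) : Sq H)⟫ = 0 := by
    intro x
    have hm := hR.1 x
    have hx1 := ressol_eq1 hm
    have hx2 := ressol_eq2 hm
    rw [inner_sq]; simp only [c1_mk2, c2_mk2]
    rw [← hx1, ← hx2]
    simp only [inner_sub_left, inner_neg_left, inner_smul_left]
    rw [sa_weak hV hm.2.1 hd.2.1, sa_weak hU hm.1 hd.1, hAd2, hAd1]
    simp only [inner_smul_right, inner_neg_right]
    ring
  have h0 := key (mk2 (C.e (c2 d)) (C.e (c1 d)))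
  rw [inner_self_eq_zero] at h0
  have he2 : C.e (c2 d) = 0 := by
    have := congrArg c1 h0; simpa using this
  have he1 : C.e (c1 d) = 0 := by
    have := congrArg c2 h0; simpa using this
  apply sq_ext
  · exact C.e_inj (by simp [he1])
  · exact C.e_inj (by simp [he2])

lemma ressol_sub {C : Core H 𝔥 Hp} {dU dV : Submodule ℂ Hp} {ζ : ℂ}
    {p q : Sq Hp} {x y : Sq H} (h1 : ResSol C dU dV 0 ζ p x)
    (h2 : ResSol C dU dV 0 ζ q y) : ResSol C dU dV 0 ζ (p - q) (x - y) := by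
  have := ressol_add h1 (ressol_smul (-1) h2)
  simpa [sub_eq_add_neg] using this

variable [CompleteSpace Hp]

lemma normHp (C : Core H 𝔥 Hp) (p : Hp) : ‖p‖ ≤ ‖C.e p‖ + ‖C.As p‖ := by
  have hg := C.graph_inner p p
  have h2 : ((‖p‖:ℝ)^2 : ℂ) = ((‖C.e p‖^2 + ‖C.As p‖^2 : ℝ) : ℂ) := by
    push_cast
    simpa [inner_self_eq_norm_sq_to_K] using hg
  have h3 : ‖p‖^2 = ‖C.e p‖^2 + ‖C.As p‖^2 := by exact_mod_cast h2
  nlinarith [norm_nonneg p, norm_nonneg (C.e p), norm_nonneg (C.As p)]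

lemma conjRes (C : Core H 𝔥 Hp) (dU dV : Submodule ℂ Hp)
    (hU : IsSAExt C dU) (hV : IsSAExt C dV) (ζ : ℂ) (R : Sq H →L[ℂ] Sq Hp)
    (hR : IsResS C dU dV 0 ζ R) :
    ∃ R', IsResS C dU dV 0 ((starRingEnd ℂ) ζ) R' := by
  classical
  have hex : ∀ y : Sq H, ∃ p : Sq Hp, ResSol C dU dV 0 ((starRingEnd ℂ) ζ) p y ∧
      C.e (c1 p) = c2 (ContinuousLinearMap.adjoint (C.emb2.comp R) (swapL H y)) ∧
      C.As (c1 p) = c2 y + (starRingEnd ℂ) ζ •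
        c1 (ContinuousLinearMap.adjoint (C.emb2.comp R) (swapL H y)) ∧
      C.e (c2 p) = c1 (ContinuousLinearMap.adjoint (C.emb2.comp R) (swapL H y)) ∧
      C.As (c2 p) = -(c1 y) - (starRingEnd ℂ) ζ •
        c2 (ContinuousLinearMap.adjoint (C.emb2.comp R) (swapL H y)) := by
    intro y
    have hc1 : c1 (swapL H y) = c2 y := rfl
    have hc2 : c2 (swapL H y) = c1 y := rfl
    obtain ⟨p₁, hp₁, he₁, hA₁⟩ :=
      (hU.sa (c2 (ContinuousLinearMap.adjoint (C.emb2.comp R) (swapL H y)))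
        (c2 y + (starRingEnd ℂ) ζ •
          c1 (ContinuousLinearMap.adjoint (C.emb2.comp R) (swapL H y)))).mpr
        (fun u hu => by
          rw [claimA_gen C dU dV ζ R hR hu (swapL H y), inner_add_right,
            inner_smul_right, hc1])
    obtain ⟨p₂, hp₂, he₂, hA₂⟩ :=
      (hV.sa (c1 (ContinuousLinearMap.adjoint (C.emb2.comp R) (swapL H y)))
        (-(c1 y) - (starRingEnd ℂ) ζ •
          c2 (ContinuousLinearMap.adjoint (C.emb2.comp R) (swapL H y)))).mpr
        (fun u hu => by
          rw [claimB_gen C dU dV ζ R hR hu (swapL H y), inner_sub_right,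
            inner_neg_right, inner_smul_right, hc2])
    refine ⟨mk2 p₁ p₂, ressol_mk (by simpa using hp₁) (by simpa using hp₂) ?_ ?_,
      by simpa using he₁, by simpa using hA₁, by simpa using he₂, by simpa using hA₂⟩
    · simp only [c1_mk2, c2_mk2, hA₂, he₁]
      module
    · simp only [c1_mk2, c2_mk2, hA₁, he₂]
      module
  have huniq : ∀ (p q : Sq Hp) (y : Sq H), ResSol C dU dV 0 ((starRingEnd ℂ) ζ) p y →
      ResSol C dU dV 0 ((starRingEnd ℂ) ζ) q y → p = q := by
    intro p q y hp hq
    have hd : ResSol C dU dV 0 ((starRingEnd ℂ) ζ) (p - q) 0 := by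
      have := ressol_sub hp hq
      simpa using this
    have := conj_uniq0 C dU dV hU hV ζ R hR hd
    exact sub_eq_zero.mp this
  choose F hF1 hF2 hF3 hF4 hF5 using hex
  let L : Sq H →ₗ[ℂ] Sq Hp :=
    { toFun := F
      map_add' := fun y z => huniq _ _ _ (hF1 (y + z)) (ressol_add (hF1 y) (hF1 z))
      map_smul' := fun a y => huniq _ _ _ (hF1 (a • y)) (ressol_smul a (hF1 y)) }
  set M1 : Sq H →L[ℂ] H :=
    c2L.comp ((ContinuousLinearMap.adjoint (C.emb2.comp R)).comp (swapL H)) with hM1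
  set M3 : Sq H →L[ℂ] H :=
    c1L.comp ((ContinuousLinearMap.adjoint (C.emb2.comp R)).comp (swapL H)) with hM3
  set M2 : Sq H →L[ℂ] H := c2L + (starRingEnd ℂ) ζ • M3 with hM2
  set M4 : Sq H →L[ℂ] H := -c1L - (starRingEnd ℂ) ζ • M1 with hM4
  have hb : ∀ y, ‖L y‖ ≤ (‖M1‖ + ‖M2‖ + ‖M3‖ + ‖M4‖) * ‖y‖ := by
    intro y
    have l1 : ‖c1 (F y)‖ ≤ ‖M1 y‖ + ‖M2 y‖ := by
      have h := normHp C (c1 (F y))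
      rw [hF2 y, hF3 y] at h
      have e1 : M1 y = c2 (ContinuousLinearMap.adjoint (C.emb2.comp R) (swapL H y)) := rfl
      have e2 : M2 y = c2 y + (starRingEnd ℂ) ζ •
          c1 (ContinuousLinearMap.adjoint (C.emb2.comp R) (swapL H y)) := rfl
      rw [e1, e2]
      exact h
    have l2 : ‖c2 (F y)‖ ≤ ‖M3 y‖ + ‖M4 y‖ := by
      have h := normHp C (c2 (F y))
      rw [hF4 y, hF5 y] at h
      have e3 : M3 y = c1 (ContinuousLinearMap.adjoint (C.emb2.comp R) (swapL H y)) := rfl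
      have e4 : M4 y = -(c1 y) - (starRingEnd ℂ) ζ •
          c2 (ContinuousLinearMap.adjoint (C.emb2.comp R) (swapL H y)) := rfl
      rw [e3, e4]
      exact h
    have l0 : ‖(L y : Sq Hp)‖ ≤ ‖c1 (F y)‖ + ‖c2 (F y)‖ := norm_sq_le _
    have b1 := M1.le_opNorm y
    have b2 := M2.le_opNorm y
    have b3 := M3.le_opNorm y
    have b4 := M4.le_opNorm y
    have hmul : (‖M1‖ + ‖M2‖ + ‖M3‖ + ‖M4‖) * ‖y‖
        = ‖M1‖*‖y‖ + ‖M2‖*‖y‖ + ‖M3‖*‖y‖ + ‖M4‖*‖y‖ := by ring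
    rw [hmul]
    linarith
  refine ⟨L.mkContinuous _ hb, fun x => ?_, fun p x hp => ?_⟩
  · rw [LinearMap.mkContinuous_apply]; exact hF1 x
  · show L.mkContinuous _ hb x = p
    rw [LinearMap.mkContinuous_apply]
    exact huniq _ _ _ (hF1 x) hp

lemma pair (C : Core H 𝔥 Hp) {tr : Hp →L[ℂ] Sq 𝔥} (htr : IsTrace C tr) (ζ : ℂ)
    (p q : Sq Hp) (x y : Sq H)
    (hp1 : -(C.As (c2 p)) - ζ • C.e (c1 p) = c1 x)
    (hp2 : C.As (c1 p) - ζ • C.e (c2 p) = c2 x)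
    (hq1 : -(C.As (c2 q)) - (starRingEnd ℂ) ζ • C.e (c1 q) = c2 y)
    (hq2 : C.As (c1 q) - (starRingEnd ℂ) ζ • C.e (c2 q) = c1 y) :
    ⟪C.emb2 p, y⟫ = ⟪c1 x, C.e (c2 q)⟫ + ⟪c2 x, C.e (c1 q)⟫
      + om (tr (c2 p)) (tr (c2 q)) - om (tr (c1 p)) (tr (c1 q)) := by
  have hAp1 : C.As (c1 p) = c2 x + ζ • C.e (c2 p) := by
    linear_combination (norm := module) hp2
  have hAp2 : C.As (c2 p) = -(c1 x) - ζ • C.e (c1 p) := by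
    linear_combination (norm := module) -hp1
  have g11 := htr.green (c1 p) (c1 q)
  have g22 := htr.green (c2 p) (c2 q)
  have lhs : ⟪C.emb2 p, y⟫ = ⟪C.e (c1 p), c1 y⟫ + ⟪C.e (c2 p), c2 y⟫ := by
    rw [emb2_apply, inner_sq]; simp
  rw [lhs, ← hq2, ← hq1]
  simp only [inner_sub_right, inner_smul_right, inner_neg_right]
  have e11 : ⟪C.e (c1 p), C.As (c1 q)⟫
      = ⟪C.As (c1 p), C.e (c1 q)⟫ - om (tr (c1 p)) (tr (c1 q)) := by
    linear_combination -g11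
  have e22 : ⟪C.e (c2 p), C.As (c2 q)⟫
      = ⟪C.As (c2 p), C.e (c2 q)⟫ - om (tr (c2 p)) (tr (c2 q)) := by
    linear_combination -g22
  rw [e11, e22, hAp1, hAp2]
  simp only [inner_add_left, inner_smul_left, inner_neg_left, inner_sub_left]
  ring

end
end Middle

/-- Theorem 2.3: symplectic resolvent difference formulas for two
canonically symplectic extensions `𝒩₁, 𝒩₂` of `N`. -/
theorem statement1
    {H 𝔥 Hp : Type*}
    [NormedAddCommGroup H] [InnerProductSpace ℂ H] [CompleteSpace H]
    [NormedAddCommGroup 𝔥] [InnerProductSpace ℂ 𝔥] [FiniteDimensional ℂ 𝔥]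
    [NormedAddCommGroup Hp] [InnerProductSpace ℂ Hp] [CompleteSpace Hp]
    (C : Core H 𝔥 Hp) (tr : Hp →L[ℂ] Sq 𝔥) (htr : IsTrace C tr)
    (dU₁ dV₁ dU₂ dV₂ : Submodule ℂ Hp)
    (hU₁ : IsSAExt C dU₁) (hV₁ : IsSAExt C dV₁)
    (hU₂ : IsSAExt C dU₂) (hV₂ : IsSAExt C dV₂)
    (P₁ Q₁ P₂ Q₂ : Sq 𝔥 →L[ℂ] Sq 𝔥)
    (hP₁ : IsOrthProj P₁) (hQ₁ : IsOrthProj Q₁)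
    (hP₂ : IsOrthProj P₂) (hQ₂ : IsOrthProj Q₂)
    (htrU₁ : tr '' (dU₁ : Set Hp) = Set.range P₁)
    (htrV₁ : tr '' (dV₁ : Set Hp) = Set.range Q₁)
    (htrU₂ : tr '' (dU₂ : Set Hp) = Set.range P₂)
    (htrV₂ : tr '' (dV₂ : Set Hp) = Set.range Q₂)
    (ζ : ℂ) (R₁ R₂ : Sq H →L[ℂ] Sq Hp)
    (hR₁ : IsResS C dU₁ dV₁ 0 ζ R₁) (hR₂ : IsResS C dU₂ dV₂ 0 ζ R₂) :
    (∃ R₂c, IsResS C dU₂ dV₂ 0 ((starRingEnd ℂ) ζ) R₂c) ∧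
    ∃ R₁c, IsResS C dU₁ dV₁ 0 ((starRingEnd ℂ) ζ) R₁c ∧
      C.emb2.comp R₁ - C.emb2.comp R₂ =
        ((swapL H).comp (ContinuousLinearMap.adjoint ((Top tr).comp R₁c))).comp
          ((calJ 𝔥).comp ((Top tr).comp R₂)) ∧
      C.emb2.comp R₁ - C.emb2.comp R₂ =
        ((swapL H).comp (ContinuousLinearMap.adjoint ((Top tr).comp R₁c))).comp
          ((pm (P₁.comp ((Jm 𝔥).comp P₂)) (-(Q₁.comp ((Jm 𝔥).comp Q₂)))).comp
            ((Top tr).comp R₂)) := by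
  obtain ⟨R₂c, hR₂c⟩ := conjRes C dU₂ dV₂ hU₂ hV₂ ζ R₂ hR₂
  obtain ⟨R₁c, hR₁c⟩ := conjRes C dU₁ dV₁ hU₁ hV₁ ζ R₁ hR₁
  have main : ∀ (x y : Sq H),
      ⟪(C.emb2.comp R₁ - C.emb2.comp R₂) x, y⟫ =
        om (tr (c1 (R₂ x))) (tr (c1 (R₁c (swapL H y)))) -
        om (tr (c2 (R₂ x))) (tr (c2 (R₁c (swapL H y)))) := by
    intro x y
    have hq := hR₁c.1 (swapL H y)
    have hq1 : -(C.As (c2 (R₁c (swapL H y)))) -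
        (starRingEnd ℂ) ζ • C.e (c1 (R₁c (swapL H y))) = c2 y := by
      have := ressol_eq1 hq
      simpa [swapL_apply] using this
    have hq2 : C.As (c1 (R₁c (swapL H y))) -
        (starRingEnd ℂ) ζ • C.e (c2 (R₁c (swapL H y))) = c1 y := by
      have := ressol_eq2 hq
      simpa [swapL_apply] using this
    have P1 := pair C htr ζ (R₁ x) (R₁c (swapL H y)) x y
      (ressol_eq1 (hR₁.1 x)) (ressol_eq2 (hR₁.1 x)) hq1 hq2
    have P2 := pair C htr ζ (R₂ x) (R₁c (swapL H y)) x y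
      (ressol_eq1 (hR₂.1 x)) (ressol_eq2 (hR₂.1 x)) hq1 hq2
    have v1 : om (tr (c1 (R₁ x))) (tr (c1 (R₁c (swapL H y)))) = 0 :=
      om_tr_zero htr hU₁ (hR₁.1 x).1 hq.1
    have v2 : om (tr (c2 (R₁ x))) (tr (c2 (R₁c (swapL H y)))) = 0 :=
      om_tr_zero htr hV₁ (hR₁.1 x).2.1 hq.2.1
    have lhs : ⟪(C.emb2.comp R₁ - C.emb2.comp R₂) x, y⟫
        = ⟪C.emb2 (R₁ x), y⟫ - ⟪C.emb2 (R₂ x), y⟫ := by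
      simp [ContinuousLinearMap.sub_apply, inner_sub_left]
    rw [lhs, P1, P2, v1, v2]
    ring
  refine ⟨⟨R₂c, hR₂c⟩, R₁c, hR₁c, ?_, ?_⟩
  · refine ContinuousLinearMap.ext fun x => ?_
    refine ext_inner_right ℂ fun y => ?_
    rw [main x y]
    have hRa : (((swapL H).comp (ContinuousLinearMap.adjoint ((Top tr).comp R₁c))).comp
        ((calJ 𝔥).comp ((Top tr).comp R₂))) x
        = swapL H (ContinuousLinearMap.adjoint ((Top tr).comp R₁c)
            (calJ 𝔥 (Top tr (R₂ x)))) := rfl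
    rw [hRa, inner_swap_left, ContinuousLinearMap.adjoint_inner_left]
    have hRb : ((Top tr).comp R₁c) (swapL H y) = Top tr (R₁c (swapL H y)) := rfl
    rw [hRb, inner_sq]
    simp only [calJ, c1_pm, c2_pm, Top_apply, c1_mk2, c2_mk2,
      ContinuousLinearMap.neg_apply, inner_neg_left, inner_Jm]
    ring
  · refine ContinuousLinearMap.ext fun x => ?_
    refine ext_inner_right ℂ fun y => ?_
    rw [main x y]
    have hq := hR₁c.1 (swapL H y)
    have hRa : (((swapL H).comp (ContinuousLinearMap.adjoint ((Top tr).comp R₁c))).comp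
        ((pm (P₁.comp ((Jm 𝔥).comp P₂)) (-(Q₁.comp ((Jm 𝔥).comp Q₂)))).comp
          ((Top tr).comp R₂))) x
        = swapL H (ContinuousLinearMap.adjoint ((Top tr).comp R₁c)
            ((pm (P₁.comp ((Jm 𝔥).comp P₂)) (-(Q₁.comp ((Jm 𝔥).comp Q₂))))
              (Top tr (R₂ x)))) := rfl
    rw [hRa, inner_swap_left, ContinuousLinearMap.adjoint_inner_left]
    have hRb : ((Top tr).comp R₁c) (swapL H y) = Top tr (R₁c (swapL H y)) := rfl
    rw [hRb, inner_sq]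
    have fixP2 : P₂ (tr (c1 (R₂ x))) = tr (c1 (R₂ x)) :=
      proj_fix hP₂ (htrU₂ ▸ ⟨c1 (R₂ x), (hR₂.1 x).1, rfl⟩)
    have fixQ2 : Q₂ (tr (c2 (R₂ x))) = tr (c2 (R₂ x)) :=
      proj_fix hQ₂ (htrV₂ ▸ ⟨c2 (R₂ x), (hR₂.1 x).2.1, rfl⟩)
    have fixP1 : P₁ (tr (c1 (R₁c (swapL H y)))) = tr (c1 (R₁c (swapL H y))) :=
      proj_fix hP₁ (htrU₁ ▸ ⟨c1 (R₁c (swapL H y)), hq.1, rfl⟩)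
    have fixQ1 : Q₁ (tr (c2 (R₁c (swapL H y)))) = tr (c2 (R₁c (swapL H y))) :=
      proj_fix hQ₁ (htrV₁ ▸ ⟨c2 (R₁c (swapL H y)), hq.2.1, rfl⟩)
    have adjP1 : ∀ a b : Sq 𝔥, ⟪P₁ a, b⟫ = ⟪a, P₁ b⟫ := fun a b => by
      conv_lhs => rw [← ContinuousLinearMap.isSelfAdjoint_iff'.mp hP₁.2]
      rw [ContinuousLinearMap.adjoint_inner_left]
    have adjQ1 : ∀ a b : Sq 𝔥, ⟪Q₁ a, b⟫ = ⟪a, Q₁ b⟫ := fun a b => by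
      conv_lhs => rw [← ContinuousLinearMap.isSelfAdjoint_iff'.mp hQ₁.2]
      rw [ContinuousLinearMap.adjoint_inner_left]
    simp only [c1_pm, c2_pm, Top_apply, c1_mk2, c2_mk2, ContinuousLinearMap.neg_apply,
      ContinuousLinearMap.comp_apply, inner_neg_left, fixP2, fixQ2]
    rw [adjP1, adjQ1, fixP1, fixQ1, inner_Jm, inner_Jm]
    ring


end CSO
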